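/- (Scalar comparison for integro-differential systems) Suppose a(t) ≤ −γ for all t ≥ 0 with γ > 0, b : [0,∞) → [0,∞) is integrable, and −γ + ∫₀^∞ b(t)dt < 0. Then every solution of the scalar equation ẋ(t) = a(t)x(t) + ∫₀^t b(t−s)x(s)ds with x(0) > 0 satisfies x(t) → 0 as t → ∞. -/

import Mathlib

open Filter MeasureTheory

open Topology Set

/-- If `f` has derivative `d` at `t₀` and `f s ≤ f t₀` for all `s` in a left
neighbourhood `Ico T t₀`, then `d ≥ 0`. -/
lemma aux_left_slope (f : ℝ → ℝ) (d T t₀ : ℝ) (h : HasDerivAt f d t₀)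
    (hT : T < t₀) (hmax : ∀ s ∈ Set.Ico T t₀, f s ≤ f t₀) : 0 ≤ d := by
  have hs : HasDerivWithinAt f d (Set.Ioo T t₀) t₀ := h.hasDerivWithinAt
  rw [hasDerivWithinAt_iff_tendsto_slope' (by simp)] at hs
  have hne : (𝓝[Set.Ioo T t₀] t₀).NeBot := right_nhdsWithin_Ioo_neBot hT
  refine ge_of_tendsto hs ?_
  filter_upwards [self_mem_nhdsWithin] with y hy
  rw [slope_def_field]
  have h1 : f y ≤ f t₀ := hmax y ⟨hy.1.le, hy.2⟩
  have h2 : y - t₀ < 0 := sub_neg.2 hy.2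
  rw [div_eq_mul_inv]
  nlinarith [inv_nonpos.2 h2.le, sub_nonpos.2 h1] 

/-- Barrier lemma: once below level `L`, a function whose derivative is negative
whenever it is at or above `L` stays below `L`. -/
lemma aux_barrier (y g : ℝ → ℝ) (T L : ℝ)
    (hy : ∀ t ≥ T, HasDerivAt y (g t) t)
    (hg : ∀ t ≥ T, L ≤ y t → g t < 0)
    (hT : y T ≤ L) : ∀ t ≥ T, y t ≤ L := by
  intro t ht
  by_contra hlt
  push_neg at hlt
  set S : Set ℝ := {s | s ∈ Set.Icc T t ∧ y s ≤ L} with hS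
  have hcont : ContinuousOn y (Set.Icc T t) := fun u hu =>
    ((hy u hu.1).continuousAt).continuousWithinAt
  have hSc : IsClosed S := by
    have : S = Set.Icc T t ∩ y ⁻¹' Set.Iic L := by ext u; simp [hS, Set.mem_Icc, and_assoc]
    rw [this]
    exact hcont.preimage_isClosed_of_isClosed isClosed_Icc isClosed_Iic
  have hSne : S.Nonempty := ⟨T, ⟨le_rfl, ht⟩, hT⟩
  have hSbdd : BddAbove S := ⟨t, fun u hu => hu.1.2⟩
  set s₀ := sSup S with hs₀
  have hs₀S : s₀ ∈ S := hSc.csSup_mem hSne hSbdd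
  have hs₀t : s₀ < t := lt_of_le_of_ne hs₀S.1.2 (by intro h; rw [h] at hs₀S; exact absurd hs₀S.2 (not_le.2 hlt))
  have habove : ∀ u ∈ Set.Ioc s₀ t, L < y u := by
    intro u hu
    by_contra hyu
    push_neg at hyu
    exact absurd (le_csSup hSbdd (⟨⟨hs₀S.1.1.trans hu.1.le, hu.2⟩, hyu⟩ : u ∈ S)) (not_le.2 hu.1)
  -- y is antitone on [s₀, t]
  have hanti : AntitoneOn y (Set.Icc s₀ t) := by
    apply antitoneOn_of_deriv_nonpos (convex_Icc s₀ t)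
    · exact hcont.mono (Set.Icc_subset_Icc hs₀S.1.1 le_rfl)
    · intro u hu
      rw [interior_Icc] at hu
      exact ((hy u (hs₀S.1.1.trans hu.1.le)).differentiableAt.differentiableWithinAt)
    · intro u hu
      rw [interior_Icc] at hu
      have hu' : u ≥ T := hs₀S.1.1.trans hu.1.le
      rw [(hy u hu').deriv]
      exact (hg u hu' (habove u ⟨hu.1, hu.2.le⟩).le).le
  have := hanti ⟨le_rfl, hs₀t.le⟩ ⟨hs₀t.le, le_rfl⟩ hs₀t.le
  linarith [hs₀S.2]

/-- Quantitative barrier: if `y ≤ M` and `y` decreases at rate `c` whenever it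
is at or above `L`, then eventually `y ≤ L`. -/
lemma aux_barrier2 (y g : ℝ → ℝ) (T L M c : ℝ) (hc : 0 < c)
    (hy : ∀ t ≥ T, HasDerivAt y (g t) t)
    (hg : ∀ t ≥ T, L ≤ y t → g t ≤ -c)
    (hM : ∀ t ≥ T, y t ≤ M) : ∀ᶠ t in atTop, y t ≤ L := by
  set D : ℝ := max 0 ((M - L) / c) + 1 with hD
  have hD0 : 0 < D := by positivity
  have hex : ∃ s ∈ Set.Icc T (T + D), y s ≤ L := by
    by_contra hno
    push_neg at hno
    -- y + c • id is antitone on [T, T+D]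
    have hanti : AntitoneOn (fun u => y u + c * u) (Set.Icc T (T + D)) := by
      apply antitoneOn_of_deriv_nonpos (convex_Icc _ _)
      · exact ContinuousOn.add (fun u hu => ((hy u hu.1).continuousAt).continuousWithinAt)
          (by fun_prop)
      · intro u hu
        rw [interior_Icc] at hu
        exact (((hy u hu.1.le).add ((hasDerivAt_id u).const_mul c)).differentiableAt).differentiableWithinAt
      · intro u hu
        rw [interior_Icc] at hu
        have hd : HasDerivAt (fun u => y u + c * u) (g u + c * 1) u :=
          (hy u hu.1.le).add ((hasDerivAt_id u).const_mul c)
        rw [hd.deriv]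
        have := hg u hu.1.le (hno u ⟨hu.1.le, hu.2.le⟩).le
        linarith
    have h1 := hanti ⟨le_rfl, by linarith⟩ ⟨by linarith, le_rfl⟩ (by linarith)
    have h2 : y T ≤ M := hM T le_rfl
    have h3 : L < y (T + D) := hno (T + D) ⟨by linarith, le_rfl⟩
    have h4 : c * D ≥ (M - L) + c := by
      have : (M - L) / c ≤ max 0 ((M - L) / c) := le_max_right _ _
      have h5 : M - L ≤ c * max 0 ((M - L) / c) := by
        rcases le_total (M - L) 0 with h | h
        · nlinarith [le_max_left 0 ((M - L) / c)]
        · calc M - L = c * ((M - L) / c) := by field_simp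
            _ ≤ c * max 0 ((M - L) / c) := by nlinarith
      simp only [hD]; nlinarith
    simp only at h1
    nlinarith
  obtain ⟨s, hs, hsL⟩ := hex
  rw [eventually_atTop]
  refine ⟨s, ?_⟩
  exact aux_barrier y g s L (fun t ht => hy t (hs.1.trans ht))
    (fun t ht hLt => lt_of_le_of_lt (hg t (hs.1.trans ht) hLt) (by linarith)) hsL


/-- Scalar comparison for integro-differential systems: if `a(t) ≤ -γ`, `b ≥ 0`
is integrable on `[0,∞)` with `-γ + ∫₀^∞ b < 0`, then every solution of
`ẋ = a(t)x + ∫₀^t b(t-s)x(s) ds` with `x(0) > 0` converges to `0`. -/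
theorem stmt_11 (γ : ℝ) (hγ : 0 < γ)
    (a : ℝ → ℝ) (ha_cont : Continuous a) (ha : ∀ t ≥ 0, a t ≤ -γ)
    (b : ℝ → ℝ) (hb_nonneg : ∀ t, 0 ≤ b t)
    (hb_int : IntegrableOn b (Set.Ici 0))
    (hsmall : -γ + ∫ t in Set.Ici (0:ℝ), b t < 0)
    (x : ℝ → ℝ)
    (hx : ∀ t ≥ 0, HasDerivAt x (a t * x t + ∫ s in (0:ℝ)..t, b (t - s) * x s) t)
    (hx0 : 0 < x 0) :
    Tendsto x atTop (nhds 0) := by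
  set β : ℝ := ∫ t in Set.Ici (0:ℝ), b t with hβ
  have hβ0 : 0 ≤ β := setIntegral_nonneg measurableSet_Ici (fun t _ => hb_nonneg t)
  have hβγ : β < γ := by linarith
  set M : ℝ := x 0 with hMdef
  set conv : ℝ → ℝ := fun t => ∫ s in (0:ℝ)..t, b (t - s) * x s with hconv
  have hxc : ∀ t ≥ (0:ℝ), ContinuousAt x t := fun t ht => (hx t ht).continuousAt
  -- interval integrability of b on nonneg intervals
  have hb_ii : ∀ u v : ℝ, 0 ≤ u → 0 ≤ v → IntervalIntegrable b volume u v := by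
    intro u v hu hv
    rw [intervalIntegrable_iff]
    exact hb_int.mono_set (fun w hw => le_trans (le_min hu hv) hw.1.le)
  have hprodI : ∀ t u v : ℝ, 0 ≤ u → u ≤ v → v ≤ t →
      IntervalIntegrable (fun s => b (t - s) * x s) volume u v := by
    intro t u v hu huv hvt
    have hbI : IntervalIntegrable (fun s => b (t - s)) volume u v := by
      have := (hb_ii (t - u) (t - v) (by linarith) (by linarith)).comp_sub_left t
      simpa using this
    refine hbI.mul_continuousOn ?_
    rw [Set.uIcc_of_le huv]
    exact fun s hs => (hxc s (hu.trans hs.1)).continuousWithinAt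
  -- basic estimate for pieces of the convolution integral
  have conv_est : ∀ t u v : ℝ, 0 ≤ u → u ≤ v → v ≤ t → ∀ c : ℝ, 0 ≤ c →
      (∀ s ∈ Set.Icc u v, |x s| ≤ c) →
      |∫ s in u..v, b (t - s) * x s| ≤ c * ∫ w in (t - v)..(t - u), b w := by
    intro t u v hu huv hvt c hc hxb
    have htu : 0 ≤ t - u := by linarith
    have htv : 0 ≤ t - v := by linarith
    have hbI : IntervalIntegrable (fun s => b (t - s)) volume u v := by
      have := (hb_ii (t - u) (t - v) htu htv).comp_sub_left t
      simpa using this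
    have hxcon : ContinuousOn x (Set.uIcc u v) := by
      rw [Set.uIcc_of_le huv]
      exact fun s hs => (hxc s (hu.trans hs.1)).continuousWithinAt
    have hprod : IntervalIntegrable (fun s => b (t - s) * x s) volume u v :=
      hbI.mul_continuousOn hxcon
    have h1 : |∫ s in u..v, b (t - s) * x s| ≤ ∫ s in u..v, |b (t - s) * x s| :=
      intervalIntegral.abs_integral_le_integral_abs huv
    have h2 : (∫ s in u..v, |b (t - s) * x s|) ≤ ∫ s in u..v, b (t - s) * c := by
      apply intervalIntegral.integral_mono_on huv hprod.abs (hbI.mul_const c)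
      intro s hs
      rw [abs_mul, abs_of_nonneg (hb_nonneg _)]
      exact mul_le_mul_of_nonneg_left (hxb s hs) (hb_nonneg _)
    have h3 : (∫ s in u..v, b (t - s) * c) = c * ∫ w in (t - v)..(t - u), b w := by
      rw [intervalIntegral.integral_mul_const, intervalIntegral.integral_comp_sub_left b t]
      ring
    linarith
  -- interval integral of b over nonneg interval is at most integral over the tail
  have int_b_le : ∀ r₁ r₂ : ℝ, 0 ≤ r₁ → r₁ ≤ r₂ →
      (∫ w in r₁..r₂, b w) ≤ ∫ w in Set.Ici r₁, b w := by
    intro r₁ r₂ h1 h12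
    rw [intervalIntegral.integral_of_le h12]
    apply setIntegral_mono_set (hb_int.mono_set (Set.Ici_subset_Ici.2 h1))
    · exact Filter.Eventually.of_forall (fun w => hb_nonneg w)
    · exact (Set.Ioc_subset_Icc_self.trans Set.Icc_subset_Ici_self).eventuallyLE
  -- tail tendsto 0
  have tail_tendsto : Tendsto (fun r => ∫ w in Set.Ici r, b w) atTop (𝓝 0) := by
    have key : ∀ r ≥ (0:ℝ), (∫ w in Set.Ici r, b w) = β - ∫ w in (0:ℝ)..r, b w := by
      intro r hr
      have hIoc : IntegrableOn b (Set.Ioc 0 r) := hb_int.mono_set (fun w hw => hw.1.le)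
      have hIoi : IntegrableOn b (Set.Ioi r) :=
        hb_int.mono_set (fun w hw => (hr.trans (le_of_lt hw)))
      have hsplit : (∫ w in Set.Ioi (0:ℝ), b w) =
          (∫ w in Set.Ioc 0 r, b w) + ∫ w in Set.Ioi r, b w := by
        rw [← setIntegral_union (Set.Ioc_disjoint_Ioi le_rfl) measurableSet_Ioi hIoc hIoi,
          Set.Ioc_union_Ioi_eq_Ioi hr]
      rw [MeasureTheory.integral_Ici_eq_integral_Ioi, intervalIntegral.integral_of_le hr]
      have hβ' : β = ∫ w in Set.Ioi (0:ℝ), b w := MeasureTheory.integral_Ici_eq_integral_Ioi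
      rw [hβ', hsplit]; ring
    have h1 : Tendsto (fun r : ℝ => ∫ w in (0:ℝ)..r, b w) atTop (𝓝 β) := by
      have h := MeasureTheory.intervalIntegral_tendsto_integral_Ioi 0
        (hb_int.mono_set (fun w hw => Set.mem_Ici.2 (le_of_lt hw))) (tendsto_id (α := ℝ))
      rwa [← MeasureTheory.integral_Ici_eq_integral_Ioi] at h
    have h2 : Tendsto (fun r => β - ∫ w in (0:ℝ)..r, b w) atTop (𝓝 (β - β)) :=
      tendsto_const_nhds.sub h1
    rw [sub_self] at h2
    refine Tendsto.congr' ?_ h2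
    filter_upwards [eventually_ge_atTop (0:ℝ)] with r hr
    exact (key r hr).symm
  -- global bound
  have hM0 : 0 < M := hx0
  have hbound : ∀ t ≥ (0:ℝ), |x t| ≤ M := by
    have key : ∀ c, M < c → ∀ t ≥ (0:ℝ), |x t| ≤ c := by
      intro c hcM
      have hc0 : 0 < c := hM0.trans hcM
      by_contra hcon
      push_neg at hcon
      obtain ⟨t₁, ht₁0, ht₁⟩ := hcon
      set S : Set ℝ := {s | 0 ≤ s ∧ c ≤ |x s|} with hS
      have hSne : S.Nonempty := ⟨t₁, ht₁0, ht₁.le⟩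
      have hSbdd : BddBelow S := ⟨0, fun s hs => hs.1⟩
      have hSc : IsClosed S := by
        have habs : ContinuousOn (fun s => |x s|) (Set.Ici 0) :=
          fun s hs => ((hxc s hs).abs).continuousWithinAt
        have hSeq : S = Set.Ici 0 ∩ (fun s => |x s|) ⁻¹' Set.Ici c := by
          ext s; simp [hS, Set.mem_Ici]
        rw [hSeq]
        exact habs.preimage_isClosed_of_isClosed isClosed_Ici isClosed_Ici
      have ht₀S : sInf S ∈ S := hSc.csInf_mem hSne hSbdd
      set t₀ := sInf S with ht₀def
      have ht₀0 : 0 ≤ t₀ := ht₀S.1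
      have ht₀pos : 0 < t₀ := by
        rcases ht₀0.lt_or_eq with h | h
        · exact h
        · exfalso
          have h0 : c ≤ |x 0| := by rw [← h] at ht₀S; exact ht₀S.2
          rw [abs_of_pos hx0] at h0
          exact absurd h0 (not_le.2 hcM)
      have hlt : ∀ s, 0 ≤ s → s < t₀ → |x s| < c := by
        intro s hs hst
        by_contra h
        push_neg at h
        exact absurd (csInf_le hSbdd ⟨hs, h⟩) (not_le.2 hst)
      have hxt₀le : |x t₀| ≤ c := by
        have htend : Tendsto (fun s => |x s|) (𝓝[Set.Ioo 0 t₀] t₀) (𝓝 |x t₀|) :=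
          (((hxc t₀ ht₀0).abs).continuousWithinAt :)
        haveI : (𝓝[Set.Ioo 0 t₀] t₀).NeBot := right_nhdsWithin_Ioo_neBot ht₀pos
        refine le_of_tendsto htend ?_
        filter_upwards [self_mem_nhdsWithin] with s hs
        exact (hlt s hs.1.le hs.2).le
      have hle : ∀ s ∈ Set.Icc 0 t₀, |x s| ≤ c := by
        intro s hs
        rcases hs.2.lt_or_eq with h | h
        · exact (hlt s hs.1 h).le
        · rw [h]; exact hxt₀le
      have hconvb : |conv t₀| ≤ c * β := by
        have h0 := conv_est t₀ 0 t₀ le_rfl ht₀0 le_rfl c hc0.le hle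
        have h1 : (∫ w in (t₀ - t₀)..(t₀ - 0), b w) ≤ β := by
          have := int_b_le 0 t₀ le_rfl ht₀0
          simpa using this
        calc |conv t₀| ≤ c * ∫ w in (t₀ - t₀)..(t₀ - 0), b w := h0
          _ ≤ c * β := mul_le_mul_of_nonneg_left h1 hc0.le
      have hcb := abs_le.1 hconvb
      have hder : HasDerivAt x (a t₀ * x t₀ + conv t₀) t₀ := hx t₀ ht₀0
      rcases le_or_gt 0 (x t₀) with hsign | hsign
      · have hcx : c ≤ x t₀ := by rw [← abs_of_nonneg hsign]; exact ht₀S.2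
        have hslope : 0 ≤ a t₀ * x t₀ + conv t₀ := by
          apply aux_left_slope x _ 0 t₀ hder ht₀pos
          intro s hs
          exact (le_abs_self _).trans ((hlt s hs.1 hs.2).le.trans hcx)
        have h1 : a t₀ * x t₀ ≤ -γ * x t₀ :=
          mul_le_mul_of_nonneg_right (ha t₀ ht₀0) (hc0.le.trans hcx)
        nlinarith [hcb.2, mul_le_mul_of_nonneg_left hcx hγ.le]
      · have hcx : c ≤ -x t₀ := by rw [← abs_of_neg hsign]; exact ht₀S.2
        have hder' : HasDerivAt (fun u => -x u) (-(a t₀ * x t₀ + conv t₀)) t₀ := hder.neg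
        have hslope : 0 ≤ -(a t₀ * x t₀ + conv t₀) := by
          apply aux_left_slope (fun u => -x u) _ 0 t₀ hder' ht₀pos
          intro s hs
          exact (neg_le_abs _).trans ((hlt s hs.1 hs.2).le.trans hcx)
        have h1 : -γ * x t₀ ≤ a t₀ * x t₀ :=
          mul_le_mul_of_nonpos_right (ha t₀ ht₀0) hsign.le
        nlinarith [hcb.1, mul_le_mul_of_nonneg_left hcx hγ.le]
    intro t ht
    by_contra h
    push_neg at h
    have := key ((M + |x t|) / 2) (by linarith) t ht
    linarith
  -- the contraction step
  have hstep : ∀ M' : ℝ, 0 ≤ M' → (∀ᶠ t in atTop, |x t| ≤ M') →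
      ∀ ε : ℝ, 0 < ε → ∀ᶠ t in atTop, |x t| ≤ (β / γ) * M' + ε := by
    intro M' hM'0 hev ε hε
    obtain ⟨T₁', hT₁'⟩ := eventually_atTop.1 hev
    set T₁ : ℝ := max T₁' 0 with hT₁def
    have hT₁0 : (0:ℝ) ≤ T₁ := le_max_right _ _
    have hT₁b : ∀ s ≥ T₁, |x s| ≤ M' := fun s hs => hT₁' s ((le_max_left _ _).trans hs)
    have htail : ∀ᶠ t in atTop, M * (∫ w in Set.Ici (t - T₁), b w) < γ * ε / 2 := by
      have h1 : Tendsto (fun t : ℝ => t - T₁) atTop atTop :=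
        tendsto_atTop_add_const_right _ _ tendsto_id
      have h2 := (tail_tendsto.comp h1).const_mul M
      rw [mul_zero] at h2
      exact h2.eventually_lt_const (by positivity)
    obtain ⟨T₂', hT₂'⟩ := eventually_atTop.1 htail
    set T : ℝ := max T₂' T₁ with hTdef
    have hT2T1 : T₁ ≤ T := le_max_right _ _
    have hT0 : (0:ℝ) ≤ T := hT₁0.trans hT2T1
    have hconvb : ∀ t ≥ T, |conv t| ≤ γ * ε / 2 + M' * β := by
      intro t ht
      have htT₁ : T₁ ≤ t := hT2T1.trans ht
      have ht0 : 0 ≤ t := hT₁0.trans htT₁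
      have hsplit : conv t =
          (∫ s in (0:ℝ)..T₁, b (t - s) * x s) + ∫ s in T₁..t, b (t - s) * x s :=
        (intervalIntegral.integral_add_adjacent_intervals
          (hprodI t 0 T₁ le_rfl hT₁0 htT₁) (hprodI t T₁ t hT₁0 htT₁ le_rfl)).symm
      have h1 := conv_est t 0 T₁ le_rfl hT₁0 htT₁ M hM0.le (fun s hs => hbound s hs.1)
      have h1' : M * (∫ w in (t - T₁)..(t - 0), b w) ≤ M * ∫ w in Set.Ici (t - T₁), b w :=
        mul_le_mul_of_nonneg_left (int_b_le (t - T₁) (t - 0) (by linarith) (by linarith)) hM0.le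
      have h1'' : M * (∫ w in Set.Ici (t - T₁), b w) ≤ γ * ε / 2 :=
        (hT₂' t ((le_max_left _ _).trans ht)).le
      have h2 := conv_est t T₁ t hT₁0 htT₁ le_rfl M' hM'0
        (fun s hs => hT₁b s hs.1)
      have h2' : (∫ w in (t - t)..(t - T₁), b w) ≤ β := by
        have := int_b_le 0 (t - T₁) le_rfl (by linarith)
        simpa using this
      have h2'' : M' * (∫ w in (t - t)..(t - T₁), b w) ≤ M' * β :=
        mul_le_mul_of_nonneg_left h2' hM'0
      calc |conv t| ≤ |∫ s in (0:ℝ)..T₁, b (t - s) * x s| + |∫ s in T₁..t, b (t - s) * x s| := by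
            rw [hsplit]; exact abs_add_le _ _
        _ ≤ γ * ε / 2 + M' * β := by linarith
    set L : ℝ := (β / γ) * M' + ε with hL
    have hL0 : 0 < L := by
      have : 0 ≤ (β / γ) * M' := mul_nonneg (div_nonneg hβ0 hγ.le) hM'0
      rw [hL]; linarith
    have hLγ : γ * L = β * M' + γ * ε := by rw [hL]; field_simp
    have hup : ∀ᶠ t in atTop, x t ≤ L := by
      apply aux_barrier2 x (fun t => a t * x t + conv t) T L M (γ * ε / 2) (by positivity)
      · intro t ht
        exact hx t (hT0.trans ht)
      · intro t ht hLx
        have ht0 : 0 ≤ t := hT0.trans ht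
        have h1 : a t * x t ≤ -γ * x t :=
          mul_le_mul_of_nonneg_right (ha t ht0) (hL0.le.trans hLx)
        have h2 : conv t ≤ γ * ε / 2 + M' * β := (abs_le.1 (hconvb t ht)).2
        nlinarith [mul_le_mul_of_nonneg_left hLx hγ.le]
      · intro t ht
        exact (abs_le.1 (hbound t (hT0.trans ht))).2
    have hdn : ∀ᶠ t in atTop, -x t ≤ L := by
      apply aux_barrier2 (fun u => -x u) (fun t => -(a t * x t + conv t)) T L M
        (γ * ε / 2) (by positivity)
      · intro t ht
        exact (hx t (hT0.trans ht)).neg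
      · intro t ht hLx
        have ht0 : 0 ≤ t := hT0.trans ht
        have hxneg : x t ≤ 0 := by linarith
        have h1 : -γ * x t ≤ a t * x t :=
          mul_le_mul_of_nonpos_right (ha t ht0) hxneg
        have h2 : -(γ * ε / 2 + M' * β) ≤ conv t := (abs_le.1 (hconvb t ht)).1
        nlinarith [mul_le_mul_of_nonneg_left hLx hγ.le]
      · intro t ht
        have := (abs_le.1 (hbound t (hT0.trans ht))).1
        linarith
    filter_upwards [hup, hdn] with t h1 h2
    rw [abs_le]
    exact ⟨by linarith, h1⟩
  -- iterate
  set q : ℝ := β / γ with hq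
  have hq0 : 0 ≤ q := div_nonneg hβ0 hγ.le
  have hq1 : q < 1 := (div_lt_one hγ).2 hβγ
  have hiter : ∀ ε : ℝ, 0 < ε → ∀ n : ℕ, ∀ᶠ t in atTop, |x t| ≤ q ^ n * M + ε / 2 := by
    intro ε hε n
    induction n with
    | zero =>
      rw [eventually_atTop]
      exact ⟨0, fun t ht => le_trans (hbound t ht) (by simp; linarith)⟩
    | succ n ih =>
      have hM' : 0 ≤ q ^ n * M + ε / 2 := by positivity
      have h := hstep _ hM' ih ((1 - q) * ε / 2) (by nlinarith)
      have heq : q * (q ^ n * M + ε / 2) + (1 - q) * ε / 2 = q ^ (n + 1) * M + ε / 2 := by ring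
      rw [hq] at heq ⊢
      filter_upwards [h] with t ht
      calc |x t| ≤ (β/γ) * (q ^ n * M + ε / 2) + (1 - q) * ε / 2 := ht
        _ = q ^ (n+1) * M + ε / 2 := by rw [← heq, hq]
  rw [Metric.tendsto_atTop]
  intro ε hε
  obtain ⟨n, hn⟩ : ∃ n : ℕ, q ^ n * M < ε / 4 := by
    have := tendsto_pow_atTop_nhds_zero_of_lt_one hq0 hq1
    have h2 := this.eventually_lt_const (show (0:ℝ) < ε / (4 * M) by positivity)
    obtain ⟨n, hn⟩ := h2.exists
    exact ⟨n, by rw [lt_div_iff₀ (by positivity : (0:ℝ) < 4 * M)] at hn; nlinarith [pow_nonneg hq0 n]⟩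
  have h := hiter (ε / 2) (by linarith) n
  rw [eventually_atTop] at h
  obtain ⟨N, hN⟩ := h
  refine ⟨N, fun t ht => ?_⟩
  have := hN t ht
  rw [Real.dist_eq, sub_zero]
  calc |x t| ≤ q ^ n * M + ε / 2 / 2 := this
    _ < ε := by linarith
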